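/- Let K be a field with a non-archimedean absolute value, let g(z) ∈ K̄[z] be monic of degree d with ρ(g) > 1, where ρ(g) = max over roots ζ₁, ζ₂ of g of max(|ζ₁ − ζ₂|, 1). Then for every c ∈ K̄ with |c| ≤ ρ(g), one has ρ(g + c) = ρ(g). -/

import Mathlib

open Polynomial

lemma pow_card_le_prod_real {a : ℝ} (s : Multiset ℝ) (ha : 0 ≤ a)
    (h : ∀ x ∈ s, a ≤ x) : a ^ Multiset.card s ≤ s.prod := by
  induction s using Multiset.induction_on with
  | empty => simp
  | cons x s ih =>
    simp only [Multiset.card_cons, Multiset.prod_cons, pow_succ, mul_comm]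
    have hx : a ≤ x := h x (Multiset.mem_cons_self _ _)
    exact mul_le_mul hx (ih fun y hy => h y (Multiset.mem_cons_of_mem hy))
      (pow_nonneg ha _) (le_trans ha hx)

lemma exists_root_pow_le {K : Type*} [Field K] [IsAlgClosed K] (v : AbsoluteValue K ℝ)
    (f : K[X]) (hf : f.Monic) (hd : f.natDegree ≠ 0) (x : K) :
    ∃ ζ : K, f.eval ζ = 0 ∧ v (x - ζ) ^ f.natDegree ≤ v (f.eval x) := by
  classical
  have hsplit : f.Splits := IsAlgClosed.splits f
  have hcard : Multiset.card f.roots = f.natDegree :=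
    (Polynomial.splits_iff_card_roots).mp hsplit
  have hne : f.roots ≠ 0 := by
    intro h0
    rw [h0] at hcard
    simp at hcard
    exact hd hcard.symm
  -- pick a root minimizing v (x - ζ)
  have htne : f.roots.toFinset.Nonempty := by
    obtain ⟨a, ha⟩ := Multiset.exists_mem_of_ne_zero hne
    exact ⟨a, Multiset.mem_toFinset.mpr ha⟩
  obtain ⟨ζ, hζmem, hζmin⟩ := f.roots.toFinset.exists_min_image (fun a => v (x - a)) htne
  have hζroot : ζ ∈ f.roots := Multiset.mem_toFinset.mp hζmem
  refine ⟨ζ, Polynomial.IsRoot.def.mp (Polynomial.isRoot_of_mem_roots hζroot), ?_⟩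
  have heq : f = (f.roots.map fun a => X - C a).prod :=
    (prod_multiset_X_sub_C_of_monic_of_roots_card_eq hf hcard).symm
  have heval : v (f.eval x) = ((f.roots.map fun a => v (x - a))).prod := by
    conv_lhs => rw [heq]
    rw [Polynomial.eval_multiset_prod]
    rw [show (Multiset.map (fun p => Polynomial.eval x p)
        (Multiset.map (fun a => X - C a) f.roots))
      = Multiset.map (fun a => x - a) f.roots by
        rw [Multiset.map_map]; apply Multiset.map_congr rfl; intro a _; simp]
    rw [map_multiset_prod v, Multiset.map_map]
    rfl
  rw [heval, ← hcard]
  have : Multiset.card f.roots = Multiset.card (f.roots.map fun a => v (x - a)) := by simp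
  rw [this]
  apply pow_card_le_prod_real _ (v.nonneg _)
  intro y hy
  obtain ⟨a, ha, rfl⟩ := Multiset.mem_map.mp hy
  exact hζmin a (Multiset.mem_toFinset.mpr ha)

/-- for a monic polynomial `g` over an algebraically closed field
with a non-archimedean absolute value, if `ρ(g) > 1` then for any `c` with
`|c| ≤ ρ(g)` one has `ρ(g + c) = ρ(g)`. -/
theorem stmt10 {K : Type*} [Field K] [IsAlgClosed K] (v : AbsoluteValue K ℝ)
    (hna : IsNonarchimedean v)
    (d : ℕ) (g : K[X]) (hmonic : g.Monic) (hdeg : g.natDegree = d)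
    (ρ : ℝ)
    (hρ2 : ∀ ζ₁ ζ₂ : K, g.eval ζ₁ = 0 → g.eval ζ₂ = 0 → v (ζ₁ - ζ₂) ≤ ρ)
    (hρ3 : ρ = 1 ∨ ∃ ζ₁ ζ₂ : K, g.eval ζ₁ = 0 ∧ g.eval ζ₂ = 0 ∧ v (ζ₁ - ζ₂) = ρ)
    (hρ : 1 < ρ)
    (c : K) (hc : v c ≤ ρ)
    (ρ' : ℝ) (hρ'1 : 1 ≤ ρ')
    (hρ'2 : ∀ ζ₁ ζ₂ : K, (g + C c).eval ζ₁ = 0 → (g + C c).eval ζ₂ = 0 →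
      v (ζ₁ - ζ₂) ≤ ρ')
    (hρ'3 : ρ' = 1 ∨ ∃ ζ₁ ζ₂ : K, (g + C c).eval ζ₁ = 0 ∧ (g + C c).eval ζ₂ = 0 ∧
      v (ζ₁ - ζ₂) = ρ') :
    ρ' = ρ := by
  classical
  -- get two distinct roots of g at distance ρ
  obtain ⟨α, β, hα, hβ, hαβ⟩ := hρ3.resolve_left (by intro h; rw [h] at hρ; exact lt_irrefl 1 hρ)
  have hρ0 : (0:ℝ) < ρ := lt_trans one_pos hρ
  have hαβne : α ≠ β := by
    intro h; rw [h, sub_self, v.map_zero] at hαβ; linarith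
  have hg0 : g ≠ 0 := hmonic.ne_zero
  -- d ≥ 2
  have hαr : α ∈ g.roots := by rw [Polynomial.mem_roots hg0]; exact hα
  have hβr : β ∈ g.roots := by rw [Polynomial.mem_roots hg0]; exact hβ
  have h2d : 2 ≤ d := by
    have hsub : ({α, β} : Finset K) ⊆ g.roots.toFinset := by
      intro x hx
      rcases Finset.mem_insert.mp hx with rfl | hx
      · exact Multiset.mem_toFinset.mpr hαr
      · rw [Finset.mem_singleton.mp hx]; exact Multiset.mem_toFinset.mpr hβr
    have hcard2 : ({α, β} : Finset K).card = 2 := by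
      rw [Finset.card_insert_of_notMem (by simpa using hαβne), Finset.card_singleton]
    calc 2 = ({α, β} : Finset K).card := hcard2.symm
      _ ≤ g.roots.toFinset.card := Finset.card_le_card hsub
      _ ≤ Multiset.card g.roots := Multiset.toFinset_card_le _
      _ ≤ g.natDegree := g.card_roots'
      _ = d := hdeg
  have hd0 : d ≠ 0 := by omega
  have hdeg' : (g + C c).natDegree = d := by rw [natDegree_add_C, hdeg]
  have hmonic' : (g + C c).Monic := by
    apply hmonic.add_of_left
    apply lt_of_le_of_lt (degree_C_le)
    rw [Polynomial.degree_eq_natDegree hg0, hdeg]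
    exact_mod_cast Nat.pos_of_ne_zero hd0
  -- key equality lemma for nonarchimedean
  have vadd : ∀ x y : K, v y < v x → v (x + y) = v x := by
    intro x y h
    refine le_antisymm (le_trans (hna x y) (max_le le_rfl h.le)) ?_
    have h2 : v x ≤ max (v (x + y)) (v y) := by
      have h3 := hna (x + y) (-y)
      simpa using h3
    rcases max_cases (v (x + y)) (v y) with ⟨he, _⟩ | ⟨he, _⟩ <;> rw [he] at h2
    · exact h2
    · linarith
  -- claim A: every root of g+c is within ρ of a root of g
  have claimA : ∀ γ : K, (g + C c).eval γ = 0 → ∃ ζ : K, g.eval ζ = 0 ∧ v (γ - ζ) ≤ ρ := by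
    intro γ hγ
    obtain ⟨ζ, hζ, hle⟩ := exists_root_pow_le v g hmonic (hdeg ▸ hd0) γ
    refine ⟨ζ, hζ, ?_⟩
    have hgγ : g.eval γ = -c := by
      have hγ' : g.eval γ + c = 0 := by simpa using hγ
      exact eq_neg_of_add_eq_zero_left hγ'
    rw [hdeg] at hle
    have hvc : v (g.eval γ) ≤ ρ := by rw [hgγ, v.map_neg]; exact hc
    have hρd : ρ ≤ ρ ^ d := le_self_pow₀ hρ.le hd0
    have : v (γ - ζ) ^ d ≤ ρ ^ d := le_trans hle (le_trans hvc hρd)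
    by_contra hcon
    push_neg at hcon
    have := pow_lt_pow_left₀ hcon hρ0.le hd0
    linarith
  -- claim B: every root of g is within < ρ of a root of g+c
  have claimB : ∀ ζ : K, g.eval ζ = 0 → ∃ γ : K, (g + C c).eval γ = 0 ∧ v (ζ - γ) < ρ := by
    intro ζ hζ
    obtain ⟨γ, hγ, hle⟩ := exists_root_pow_le v (g + C c) hmonic' (hdeg' ▸ hd0) ζ
    refine ⟨γ, hγ, ?_⟩
    have heval : (g + C c).eval ζ = c := by simp [hζ]
    rw [hdeg', heval] at hle
    have hρd : ρ < ρ ^ d := by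
      calc ρ = ρ ^ 1 := (pow_one ρ).symm
        _ < ρ ^ d := pow_lt_pow_right₀ hρ (by omega)
    have hlt : v (ζ - γ) ^ d < ρ ^ d := lt_of_le_of_lt (le_trans hle hc) hρd
    by_contra hcon
    push_neg at hcon
    exact absurd (pow_le_pow_left₀ hρ0.le hcon d) (not_le.mpr hlt)
  -- ρ' ≤ ρ
  have hle1 : ρ' ≤ ρ := by
    rcases hρ'3 with h1 | ⟨γ₁, γ₂, hγ₁, hγ₂, hvγ⟩
    · rw [h1]; exact hρ.le
    obtain ⟨ζ₁, hζ₁, hd₁⟩ := claimA γ₁ hγ₁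
    obtain ⟨ζ₂, hζ₂, hd₂⟩ := claimA γ₂ hγ₂
    rw [← hvγ]
    have heq : γ₁ - γ₂ = (γ₁ - ζ₁) + ((ζ₁ - ζ₂) + (ζ₂ - γ₂)) := by ring
    rw [heq]
    refine le_trans (hna _ _) (max_le hd₁ (le_trans (hna _ _) (max_le (hρ2 _ _ hζ₁ hζ₂) ?_)))
    rw [v.map_sub]
    exact hd₂
  -- ρ ≤ ρ'
  have hle2 : ρ ≤ ρ' := by
    obtain ⟨γα, hγα, hdα⟩ := claimB α hα
    obtain ⟨γβ, hγβ, hdβ⟩ := claimB β hβ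
    have hu : v ((γα - α) + (β - γβ)) < ρ := by
      refine lt_of_le_of_lt (hna _ _) (max_lt ?_ ?_)
      · rw [v.map_sub]; exact hdα
      · exact hdβ
    have heq : γα - γβ = (α - β) + ((γα - α) + (β - γβ)) := by ring
    have hveq : v (γα - γβ) = ρ := by
      rw [heq, vadd _ _ (by rw [hαβ]; exact hu), hαβ]
    rw [← hveq]
    exact hρ'2 _ _ hγα hγβ
  linarith
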